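/- For any set A, the polymorphism clone of the ternary relation δ_A = {(x1,x2,x3) ∈ A^3 : x1 = x2 or x2 = x3} equals the polymorphism clone of Δ_A = {(x1,x2,x3,x4) ∈ A^4 : x1 = x2 or x3 = x4}, and both equal the clone of essentially at most unary operations on A (operations of the form (x1,...,xn) ↦ f(x_i) for some unary f). -/
import Mathlib


/-- A clone on a set `A`: a family of finitary operations containing all
projections and closed under composition. -/
structure Clone (A : Type) where
  ops : ∀ n : ℕ, Set ((Fin n → A) → A)
  proj_mem : ∀ (n : ℕ) (i : Fin n), (fun x => x i) ∈ ops n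
  comp_mem : ∀ (m n : ℕ) (f : (Fin n → A) → A) (g : Fin n → (Fin m → A) → A),
      f ∈ ops n → (∀ i, g i ∈ ops m) → (fun x => f (fun i => g i x)) ∈ ops m

/-- `X ⊆ A^n` is algebraic w.r.t. a family of operations `F`: it is the solution
set of some system of equations between `n`-ary members of `F`. -/
def IsAlgSet {A : Type} (F : ∀ n : ℕ, Set ((Fin n → A) → A)) (n : ℕ)
    (X : Set (Fin n → A)) : Prop :=
  ∃ (I : Type) (p q : I → (Fin n → A) → A),
    (∀ i, p i ∈ F n) ∧ (∀ i, q i ∈ F n) ∧ X = {x | ∀ i, p i x = q i x}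

/-- Equational additivity: unions of algebraic sets of the same arity are algebraic. -/
def EqAdditive {A : Type} (F : ∀ n : ℕ, Set ((Fin n → A) → A)) : Prop :=
  ∀ (n : ℕ) (X Y : Set (Fin n → A)),
    IsAlgSet F n X → IsAlgSet F n Y → IsAlgSet F n (X ∪ Y)

/-- The quaternary relation `Δ_A`. -/
def Delta (A : Type) : Set (Fin 4 → A) := {x | x 0 = x 1 ∨ x 2 = x 3}
/-- The ternary relation `δ_A`. -/
def Delta3 (A : Type) : Set (Fin 3 → A) := {x | x 0 = x 1 ∨ x 1 = x 2}

/-- `f` is a polymorphism of the `k`-ary relation `ρ`. -/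
def IsPolymorphism {A : Type} {k : ℕ} (ρ : Set (Fin k → A)) {n : ℕ}
    (f : (Fin n → A) → A) : Prop :=
  ∀ r : Fin n → Fin k → A, (∀ j, r j ∈ ρ) → (fun i => f (fun j => r j i)) ∈ ρ

lemma agree_const {A : Type} {n : ℕ} (f : (Fin n → A) → A)
    (h : ∀ (i : Fin n) (a a' : Fin n → A), (∀ k, k ≠ i → a k = a' k) → f a = f a') :
    ∀ x y : Fin n → A, f x = f y := by
  have key : ∀ (s : Finset (Fin n)) (x y : Fin n → A), (∀ k, k ∉ s → x k = y k) → f x = f y := by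
    intro s
    induction s using Finset.induction_on with
    | empty =>
      intro x y hxy
      congr 1; funext k; exact hxy k (by simp)
    | @insert i s hi ih =>
      intro x y hxy
      have h1 : f x = f (Function.update y i (x i)) := by
        apply ih
        intro k hk
        by_cases hki : k = i
        · subst hki; simp
        · rw [Function.update_of_ne hki]
          exact hxy k (by simp [hki, hk])
      rw [h1]
      apply h i
      intro k hk
      rw [Function.update_of_ne hk]
  intro x y
  exact key Finset.univ x y (fun k hk => absurd (Finset.mem_univ k) hk)

lemma step_to_unary {A : Type} {n : ℕ} (f : (Fin (n+1) → A) → A)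
    (hstep : ∀ (i : Fin (n+1)) (a a' : Fin (n+1) → A),
      (∀ k, k ≠ i → a k = a' k) → f a ≠ f a' →
      ∀ z : Fin (n+1) → A, z i = a' i → f z = f a') :
    ∃ (i : Fin (n + 1)) (u : A → A), f = fun x => u (x i) := by
  by_cases hdep : ∃ (i : Fin (n+1)) (a a' : Fin (n+1) → A),
      (∀ k, k ≠ i → a k = a' k) ∧ f a ≠ f a'
  · obtain ⟨i, a, a', hag, hne⟩ := hdep
    refine ⟨i, fun v => f (Function.update a i v), ?_⟩
    funext z
    show f z = f (Function.update a i (z i))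
    set c := z i with hc
    set w := Function.update a i c with hw
    by_cases hfw : f w = f a
    · have hw' : Function.update a' i c = w := by
        funext k
        by_cases hk : k = i
        · subst hk; simp [hw]
        · rw [hw, Function.update_of_ne hk, Function.update_of_ne hk]
          exact (hag k hk).symm
      have hne2 : f a' ≠ f w := fun h => hne (h.trans hfw).symm
      have := hstep i a' (Function.update a' i c)
        (fun k hk => (Function.update_of_ne hk _ _).symm)
        (by rw [hw']; exact hne2)
        z (by rw [hw']; simp [hw, hc])
      rw [this, hw']
    · have := hstep i a w (fun k hk => (Function.update_of_ne hk _ _).symm)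
        (fun h => hfw h.symm) z (by simp [hw, hc])
      exact this
  · push_neg at hdep
    have hconst := agree_const f (fun i a a' hk => hdep i a a' hk)
    exact ⟨0, fun v => f (fun _ => v), funext fun z => hconst z _⟩

lemma unary_pol3 {A : Type} {n : ℕ} (f : (Fin (n+1) → A) → A)
    (h : ∃ (i : Fin (n + 1)) (u : A → A), f = fun x => u (x i)) :
    IsPolymorphism (Delta3 A) f := by
  obtain ⟨i, u, rfl⟩ := h
  intro r hr
  have := hr i
  simp only [Delta3, Set.mem_setOf_eq] at this ⊢
  rcases this with h1 | h1
  · left; rw [h1]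
  · right; rw [h1]

lemma unary_pol4 {A : Type} {n : ℕ} (f : (Fin (n+1) → A) → A)
    (h : ∃ (i : Fin (n + 1)) (u : A → A), f = fun x => u (x i)) :
    IsPolymorphism (Delta A) f := by
  obtain ⟨i, u, rfl⟩ := h
  intro r hr
  have := hr i
  simp only [Delta, Set.mem_setOf_eq] at this ⊢
  rcases this with h1 | h1
  · left; rw [h1]
  · right; rw [h1]

lemma pol3_step {A : Type} {n : ℕ} (f : (Fin (n+1) → A) → A)
    (hpol : IsPolymorphism (Delta3 A) f) :
    ∀ (i : Fin (n+1)) (a a' : Fin (n+1) → A),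
      (∀ k, k ≠ i → a k = a' k) → f a ≠ f a' →
      ∀ z : Fin (n+1) → A, z i = a' i → f z = f a' := by
  intro i a a' hag hne z hz
  have hmem := hpol (fun k => ![a k, a' k, z k]) ?_
  · simp only [Delta3, Set.mem_setOf_eq, Matrix.cons_val_zero, Matrix.cons_val_one,
      Matrix.head_cons, Matrix.cons_val_two, Matrix.tail_cons] at hmem
    rcases hmem with h1 | h1
    · exact absurd h1 hne
    · exact h1.symm
  · intro k
    simp only [Delta3, Set.mem_setOf_eq, Matrix.cons_val_zero, Matrix.cons_val_one,
      Matrix.head_cons, Matrix.cons_val_two, Matrix.tail_cons]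
    by_cases hk : k = i
    · subst hk; right; rw [hz]
    · left; exact hag k hk

lemma pol4_step {A : Type} {n : ℕ} (f : (Fin (n+1) → A) → A)
    (hpol : IsPolymorphism (Delta A) f) :
    ∀ (i : Fin (n+1)) (a a' : Fin (n+1) → A),
      (∀ k, k ≠ i → a k = a' k) → f a ≠ f a' →
      ∀ z : Fin (n+1) → A, z i = a' i → f z = f a' := by
  intro i a a' hag hne z hz
  have hmem := hpol (fun k => ![a k, a' k, a' k, z k]) ?_
  · simp only [Delta, Set.mem_setOf_eq, Matrix.cons_val_zero, Matrix.cons_val_one,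
      Matrix.head_cons, Matrix.cons_val_two, Matrix.tail_cons, Matrix.cons_val_three] at hmem
    rcases hmem with h1 | h1
    · exact absurd h1 hne
    · exact h1.symm
  · intro k
    simp only [Delta, Set.mem_setOf_eq, Matrix.cons_val_zero, Matrix.cons_val_one,
      Matrix.head_cons, Matrix.cons_val_two, Matrix.tail_cons, Matrix.cons_val_three]
    by_cases hk : k = i
    · subst hk; right; rw [hz]
    · left; exact hag k hk

/-- The polymorphisms of `δ_A` coincide with the polymorphisms of `Δ_A`, and
both are exactly the essentially at most unary operations on `A`. -/
theorem stmt6 {A : Type} (n : ℕ) (f : (Fin (n + 1) → A) → A) :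
    (IsPolymorphism (Delta3 A) f ↔ IsPolymorphism (Delta A) f) ∧
    (IsPolymorphism (Delta A) f ↔
      ∃ (i : Fin (n + 1)) (u : A → A), f = fun x => u (x i)) := by
  have h3u : IsPolymorphism (Delta3 A) f →
      ∃ (i : Fin (n + 1)) (u : A → A), f = fun x => u (x i) :=
    fun h => step_to_unary f (pol3_step f h)
  have h4u : IsPolymorphism (Delta A) f →
      ∃ (i : Fin (n + 1)) (u : A → A), f = fun x => u (x i) :=
    fun h => step_to_unary f (pol4_step f h)
  exact ⟨⟨fun h => unary_pol4 f (h3u h), fun h => unary_pol3 f (h4u h)⟩,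
    ⟨h4u, unary_pol4 f⟩⟩
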